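/- arXiv:2003.10015 — 5 statements merged into one kernel-verified Lean document; each statement's English description precedes it below -/
import Mathlib

section
/- In a reproducing kernel Hilbert space H of analytic functions on 𝔻 with bounded shift and dense polynomials, if θ ∈ H is both cyclic and H-inner, then conj(θ(0))·θ equals the reproducing kernel k_0 at the point 0; in particular any cyclic inner function is a unimodular-constant multiple of the normalized reproducing kernel at 0. -/
open Metric Filter
open scoped ComplexConjugate

noncomputable section

/-- A reproducing kernel Hilbert space of analytic functions on the unit disk,
with bounded shift operator, dense polynomials, and reproducing kernel at 0. -/
structure DiskRKHS (H : Type*) [NormedAddCommGroup H] [InnerProductSpace ℂ H]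
    [CompleteSpace H] where
  ev : H →ₗ[ℂ] (ℂ → ℂ)
  ev_inj : Function.Injective ev
  analytic : ∀ f : H, AnalyticOn ℂ (ev f) (ball (0:ℂ) 1)
  shift : H →L[ℂ] H
  ev_shift : ∀ f : H, ∀ z ∈ ball (0:ℂ) 1, ev (shift f) z = z * ev f z
  one : H
  ev_one : ∀ z ∈ ball (0:ℂ) 1, ev one z = 1
  polyDense : Dense ((Submodule.span ℂ (Set.range fun n : ℕ => (shift ^ n) one) : Submodule ℂ H) : Set H)
  k0 : H
  k0_ne : k0 ≠ 0
  repro : ∀ h : H, (inner ℂ k0 h : ℂ) = ev h 0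

namespace DiskRKHS

variable {H : Type*} [NormedAddCommGroup H] [InnerProductSpace ℂ H] [CompleteSpace H]

/-- The subspace `f·P_n` of polynomial multiples of `f` of degree ≤ n. -/
def fP (R : DiskRKHS H) (f : H) (n : ℕ) : Submodule ℂ H :=
  Submodule.span ℂ (Set.range fun k : Fin (n+1) => (R.shift ^ (k : ℕ)) f)

/-- The closed shift-invariant subspace `[f]` generated by `f`. -/
def cyc (R : DiskRKHS H) (f : H) : Submodule ℂ H :=
  (Submodule.span ℂ (Set.range fun n : ℕ => (R.shift ^ n) f)).topologicalClosure

/-- The element `p(z) f(z)`, i.e. `p(S) f`. -/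
def pApply (R : DiskRKHS H) (p : Polynomial ℂ) (f : H) : H :=
  p.sum fun k a => a • ((R.shift ^ k) f)

/-- The normalized reproducing kernel `k̂₀ = k₀ / ‖k₀‖` at 0. -/
def normK0 (R : DiskRKHS H) : H := ‖R.k0‖⁻¹ • R.k0

/-- Membership in `K_{Sf} = H ⊖ [Sf]`, i.e. orthogonality to `z^k f` for all `k ≥ 1`. -/
def InKSf (R : DiskRKHS H) (f h : H) : Prop :=
  ∀ k : ℕ, 1 ≤ k → (inner ℂ ((R.shift ^ k) f) h : ℂ) = 0

end DiskRKHS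

/-- `φ` is the orthogonal projection of `g` onto the subspace `K`. -/
def IsProjOn {H : Type*} [NormedAddCommGroup H] [InnerProductSpace ℂ H] [CompleteSpace H]
    (K : Submodule ℂ H) (g φ : H) : Prop :=
  φ ∈ K ∧ ∀ w ∈ K, (inner ℂ w (g - φ) : ℂ) = 0

theorem stmt1 {H : Type*} [NormedAddCommGroup H] [InnerProductSpace ℂ H] [CompleteSpace H]
    (R : DiskRKHS H) (θ : H)
    (hcyc : R.cyc θ = ⊤)
    (hinner : ∀ j : ℕ, (inner ℂ ((R.shift ^ j) θ) θ : ℂ) = if j = 0 then 1 else 0) :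
    (starRingEnd ℂ) (R.ev θ 0) • θ = R.k0 ∧
      ∃ c : ℂ, ‖c‖ = 1 ∧ θ = c • R.normK0 := by
  have h0 : (0:ℂ) ∈ ball (0:ℂ) 1 := by simp
  have hev : ∀ n : ℕ, n ≠ 0 → R.ev ((R.shift ^ n) θ) 0 = 0 := by
    intro n hn
    obtain ⟨m, rfl⟩ := Nat.exists_eq_succ_of_ne_zero hn
    have h1 : (R.shift ^ (m+1)) θ = R.shift ((R.shift ^ m) θ) := by
      rw [pow_succ']; rfl
    rw [h1, R.ev_shift _ 0 h0, zero_mul]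
  set d : H := (starRingEnd ℂ) (R.ev θ 0) • θ - R.k0 with hd
  have hgen : ∀ n : ℕ, (inner ℂ ((R.shift ^ n) θ) d : ℂ) = 0 := by
    intro n
    have h2 : (inner ℂ ((R.shift ^ n) θ) R.k0 : ℂ)
        = (starRingEnd ℂ) (R.ev ((R.shift ^ n) θ) 0) := by
      rw [← R.repro, ← inner_conj_symm]
    rw [hd, inner_sub_right, inner_smul_right, hinner n, h2]
    by_cases h : n = 0
    · subst h; simp
    · rw [hev n h]; simp [h]
  have hdo : d ∈ (Submodule.span ℂ (Set.range fun n : ℕ => (R.shift ^ n) θ))ᗮ := by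
    rw [Submodule.mem_orthogonal]
    intro v hv
    induction hv using Submodule.span_induction with
    | mem x hx => obtain ⟨n, rfl⟩ := hx; exact hgen n
    | zero => simp
    | add x y _ _ hx hy => rw [inner_add_left, hx, hy, add_zero]
    | smul a x _ hx => rw [inner_smul_left, hx, mul_zero]
  have hbot : (Submodule.span ℂ (Set.range fun n : ℕ => (R.shift ^ n) θ))ᗮ = ⊥ := by
    rw [← Submodule.topologicalClosure_eq_top_iff]
    exact hcyc
  have hd0 : d = 0 := by
    rw [hbot] at hdo; simpa using hdo
  have hmain : (starRingEnd ℂ) (R.ev θ 0) • θ = R.k0 := by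
    rw [hd] at hd0; exact sub_eq_zero.mp hd0
  refine ⟨hmain, ?_⟩
  have hθ0 : R.ev θ 0 ≠ 0 := by
    intro h
    apply R.k0_ne
    rw [← hmain, h, map_zero, zero_smul]
  have hθn : ‖θ‖ = 1 := by
    have := hinner 0
    simp only [pow_zero, ContinuousLinearMap.one_apply, if_pos rfl] at this
    have h1 : ‖θ‖ ^ 2 = 1 := by
      have := congrArg Complex.re this
      rw [← inner_self_eq_norm_sq (𝕜 := ℂ)]; simpa using this
    nlinarith [norm_nonneg θ]
  have hk0n : ‖R.k0‖ = ‖R.ev θ 0‖ := by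
    rw [← hmain, norm_smul, hθn, mul_one, RCLike.norm_conj]
  refine ⟨R.ev θ 0 / ‖R.k0‖, ?_, ?_⟩
  · rw [norm_div, hk0n]
    simp [abs_of_nonneg (norm_nonneg _), div_self (norm_ne_zero_iff.mpr hθ0)]
  · have hkne : (‖R.k0‖ : ℂ) ≠ 0 := by
      simpa [hk0n] using norm_ne_zero_iff.mpr hθ0
    have habs : (R.ev θ 0) * (starRingEnd ℂ) (R.ev θ 0) = (‖R.k0‖ : ℂ) * ‖R.k0‖ := by
      rw [Complex.mul_conj]
      norm_cast
      rw [hk0n, Complex.normSq_eq_norm_sq, sq]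
    have hscal : R.ev θ 0 / (‖R.k0‖ : ℂ) * (‖R.k0‖ : ℂ)⁻¹ * (starRingEnd ℂ) (R.ev θ 0) = 1 := by
      field_simp
      linear_combination habs
    calc θ = ((R.ev θ 0 / (‖R.k0‖ : ℂ)) * (‖R.k0‖ : ℂ)⁻¹ * (starRingEnd ℂ) (R.ev θ 0)) • θ := by
            rw [hscal, one_smul]
      _ = (R.ev θ 0 / (‖R.k0‖ : ℂ)) • ((‖R.k0‖ : ℂ)⁻¹ • ((starRingEnd ℂ) (R.ev θ 0) • θ)) := by
            rw [smul_smul, smul_smul]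
      _ = (R.ev θ 0 / ↑‖R.k0‖) • R.normK0 := by
            rw [hmain, DiskRKHS.normK0, RCLike.real_smul_eq_coe_smul (K := ℂ)]
            norm_cast
end
end

section
/- Let f ∈ H with f(0) ≠ 0 and let p_n* be the n-th optimal polynomial approximant to k̂_0/f, i.e., p_n* f is the orthogonal projection of k̂_0 onto f·P_n. If there is a power series φ(z) = Σ a_k z^k and an integer M such that p_n* equals the n-th Taylor truncation T_n(φ) for all n ≥ M, then p_n* = p_M* for all n ≥ M. -/
open Metric Filter
open scoped ComplexConjugate

noncomputable section

open scoped Topology in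
theorem stmt3 {H : Type*} [NormedAddCommGroup H] [InnerProductSpace ℂ H] [CompleteSpace H]
    (R : DiskRKHS H) (f : H) (hf : R.ev f 0 ≠ 0) (p : ℕ → Polynomial ℂ)
    (hdeg : ∀ n : ℕ, (p n).degree ≤ n)
    (hproj : ∀ n : ℕ, IsProjOn (R.fP f n) R.normK0 (R.pApply (p n) f))
    (a : ℕ → ℂ) (M : ℕ)
    (htrunc : ∀ n, M ≤ n → ∀ k : ℕ, (p n).coeff k = if k ≤ n then a k else 0) :
    ∀ n, M ≤ n → p n = p M := by
  -- evaluation of shifted elements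
  have hev : ∀ (m : ℕ) (h : H), ∀ z ∈ ball (0:ℂ) 1,
      R.ev ((R.shift ^ m) h) z = z ^ m * R.ev h z := by
    intro m
    induction m with
    | zero => intro h z hz; simp
    | succ m ih =>
      intro h z hz
      rw [pow_succ', ContinuousLinearMap.mul_apply, R.ev_shift _ z hz, ih h z hz,
        pow_succ']
      ring
  have h0ball : (0:ℂ) ∈ ball (0:ℂ) 1 := by simp
  -- nonvanishing of z^m f
  have hgne : ∀ m : ℕ, (R.shift ^ m) f ≠ 0 := by
    intro m hg
    have hz : ∀ z ∈ ball (0:ℂ) 1, z ≠ 0 → R.ev f z = 0 := by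
      intro z hz hz0
      have h00 : z ^ m * R.ev f z = 0 := by
        have := hev m f z hz
        rw [hg, map_zero] at this
        simpa using this.symm
      exact (mul_eq_zero.mp h00).resolve_left (pow_ne_zero _ hz0)
    have hc : ContinuousAt (R.ev f) 0 :=
      ((R.analytic f).continuousOn.continuousAt (isOpen_ball.mem_nhds h0ball))
    have ht : Tendsto (R.ev f) (𝓝[≠] (0:ℂ)) (𝓝 (R.ev f 0)) :=
      hc.tendsto.mono_left nhdsWithin_le_nhds
    have hev0 : ∀ᶠ z in 𝓝[≠] (0:ℂ), R.ev f z = 0 := by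
      filter_upwards [self_mem_nhdsWithin,
        eventually_nhdsWithin_of_eventually_nhds (isOpen_ball.eventually_mem h0ball)]
        with z hzne hzb
      exact hz z hzb hzne
    have ht0 : Tendsto (R.ev f) (𝓝[≠] (0:ℂ)) (𝓝 0) :=
      Tendsto.congr' (by filter_upwards [hev0] with z h; exact h.symm) tendsto_const_nhds
    exact hf (tendsto_nhds_unique ht ht0)
  -- inner ℂ products with k0
  have hk0 : ∀ m : ℕ, 1 ≤ m → (inner ℂ ((R.shift ^ m) f) R.normK0 : ℂ) = 0 := by
    intro m hm
    have h1 : (inner ℂ R.k0 ((R.shift ^ m) f) : ℂ) = 0 := by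
      rw [R.repro, hev m f 0 h0ball, zero_pow (by omega), zero_mul]
    have h2 : (inner ℂ ((R.shift ^ m) f) R.k0 : ℂ) = 0 := by
      rw [← inner_conj_symm, h1, map_zero]
    unfold DiskRKHS.normK0
    have : ((‖R.k0‖⁻¹ : ℝ) • R.k0 : H) = ((‖R.k0‖⁻¹ : ℝ) : ℂ) • R.k0 := by
      rw [Complex.coe_smul]
    rw [this, inner_smul_right, h2, mul_zero]
  -- pApply linearity facts
  have pApply_add : ∀ q r : Polynomial ℂ, R.pApply (q + r) f = R.pApply q f + R.pApply r f := by
    intro q r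
    exact Polynomial.sum_add_index q r _ (fun k => zero_smul ℂ _) (fun k b c => add_smul b c _)
  have pApply_mono : ∀ (c : ℂ) (m : ℕ),
      R.pApply (Polynomial.C c * Polynomial.X ^ m) f = c • (R.shift ^ m) f := by
    intro c m
    rw [Polynomial.C_mul_X_pow_eq_monomial]
    exact Polynomial.sum_monomial_index c _ (zero_smul ℂ _)
  -- key step: a (n+1) = 0 for n ≥ M
  have key : ∀ n, M ≤ n → a (n+1) = 0 := by
    intro n hn
    by_contra hc
    set g := (R.shift ^ (n+1)) f with hgdef
    set c := a (n+1) with hcdef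
    have hpoly : p (n+1) = p n + Polynomial.C c * Polynomial.X ^ (n+1) := by
      ext k
      rw [Polynomial.coeff_add, htrunc (n+1) (le_trans hn (Nat.le_succ n)) k,
        htrunc n hn k, Polynomial.coeff_C_mul, Polynomial.coeff_X_pow]
      by_cases h1 : k ≤ n
      · rw [if_pos (by omega), if_pos h1, if_neg (by omega)]; ring
      by_cases h2 : k = n+1
      · subst h2; rw [if_pos le_rfl, if_neg h1, if_pos rfl]; ring
      · rw [if_neg (by omega), if_neg h1, if_neg (by omega)]; ring
    have hPsucc : R.pApply (p (n+1)) f = R.pApply (p n) f + c • g := by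
      rw [hpoly, pApply_add, pApply_mono]
    -- membership of generators
    have hmem : ∀ (N j : ℕ), j ≤ N → (R.shift ^ j) f ∈ R.fP f N := by
      intro N j hj
      exact Submodule.subset_span ⟨⟨j, by omega⟩, rfl⟩
    -- orthogonality of g to generators of fP f n
    have h3 : ∀ j : ℕ, j ≤ n → (inner ℂ ((R.shift ^ j) f) g : ℂ) = 0 := by
      intro j hj
      have ha := (hproj n).2 _ (hmem n j hj)
      have hb := (hproj (n+1)).2 _ (hmem (n+1) j (by omega))
      rw [inner_sub_right, sub_eq_zero] at ha hb
      have : (inner ℂ ((R.shift ^ j) f) (R.pApply (p (n+1)) f) : ℂ)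
          = inner ℂ ((R.shift ^ j) f) (R.pApply (p n) f) := hb.symm.trans ha
      rw [hPsucc, inner_add_right, inner_smul_right] at this
      have hcz : c * (inner ℂ ((R.shift ^ j) f) g : ℂ) = 0 := by linear_combination this
      exact (mul_eq_zero.mp hcz).resolve_left hc
    -- g orthogonal to all of fP f n
    have horth : ∀ x ∈ R.fP f n, (inner ℂ g x : ℂ) = 0 := by
      intro x hx
      induction hx using Submodule.span_induction with
      | mem x hx' =>
        obtain ⟨j, rfl⟩ := hx'
        rw [← inner_conj_symm, h3 j (by omega), map_zero]
      | zero => simp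
      | add x y _ _ hx hy => rw [inner_add_right, hx, hy, add_zero]
      | smul t x _ hx => rw [inner_smul_right, hx, mul_zero]
    -- g orthogonal to normK0
    have h1 : (inner ℂ g R.normK0 : ℂ) = 0 := hk0 (n+1) (by omega)
    have h2 := (hproj (n+1)).2 _ (hmem (n+1) (n+1) le_rfl)
    rw [inner_sub_right, h1, zero_sub, neg_eq_zero, hPsucc, inner_add_right,
      inner_smul_right, horth _ (hproj n).1, zero_add] at h2
    have hgg : (inner ℂ g g : ℂ) = 0 := (mul_eq_zero.mp h2).resolve_left hc
    exact hgne (n+1) (inner_self_eq_zero.mp hgg)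
  -- conclude
  intro n hn
  ext k
  rw [htrunc n hn k, htrunc M le_rfl k]
  by_cases h1 : k ≤ M
  · rw [if_pos (by omega), if_pos h1]
  · rw [if_neg h1]
    by_cases h2 : k ≤ n
    · rw [if_pos h2]
      exact key (k-1) (by omega) ▸ (by congr 1; omega)
    · rw [if_neg h2]
end
end

section
/- Let f ∈ H with f(0) ≠ 0. If f is H-inner, then for every n ≥ 0 the optimal polynomial approximant p_n* to k̂_0/f is the constant conj(f(0))/‖k_0‖ (equivalently, constant); conversely if all p_n* are the same constant conj(f(0)) (after normalization), then f is H-inner. -/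
open Metric Filter
open scoped ComplexConjugate

noncomputable section

/-- Projections in the sense of `IsProjOn` are unique. -/
lemma IsProjOn.unique {H : Type*} [NormedAddCommGroup H] [InnerProductSpace ℂ H]
    [CompleteSpace H] {K : Submodule ℂ H} {g φ ψ : H}
    (hφ : IsProjOn K g φ) (hψ : IsProjOn K g ψ) : φ = ψ := by
  have hmem : φ - ψ ∈ K := K.sub_mem hφ.1 hψ.1
  have h1 : (inner ℂ (φ - ψ) (g - φ) : ℂ) = 0 := hφ.2 _ hmem
  have h2 : (inner ℂ (φ - ψ) (g - ψ) : ℂ) = 0 := hψ.2 _ hmem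
  have h3 : (inner ℂ (φ - ψ) ((g - ψ) - (g - φ)) : ℂ) = 0 := by
    rw [inner_sub_right, h1, h2, sub_zero]
  have heq : (g - ψ) - (g - φ) = φ - ψ := by abel
  rw [heq] at h3
  exact sub_eq_zero.mp (inner_self_eq_zero.mp h3)

lemma DiskRKHS.ev_pow_shift_zero {H : Type*} [NormedAddCommGroup H] [InnerProductSpace ℂ H]
    [CompleteSpace H] (R : DiskRKHS H) (f : H) (k : ℕ) (hk : 1 ≤ k) :
    R.ev ((R.shift ^ k) f) 0 = 0 := by
  obtain ⟨m, rfl⟩ := Nat.exists_eq_add_of_le hk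
  have h0 : (0 : ℂ) ∈ ball (0:ℂ) 1 := by simp
  have h1 := R.ev_shift ((R.shift ^ m) f) 0 h0
  rw [add_comm, pow_succ', ContinuousLinearMap.mul_apply]
  simpa using h1

lemma DiskRKHS.inner_pow_k0 {H : Type*} [NormedAddCommGroup H] [InnerProductSpace ℂ H]
    [CompleteSpace H] (R : DiskRKHS H) (f : H) (k : ℕ) :
    (inner ℂ ((R.shift ^ k) f) R.k0 : ℂ)
      = if k = 0 then (starRingEnd ℂ) (R.ev f 0) else 0 := by
  rw [← inner_conj_symm, R.repro]
  rcases Nat.eq_zero_or_pos k with rfl | hk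
  · simp
  · rw [R.ev_pow_shift_zero f k hk]
    simp [Nat.one_le_iff_ne_zero.mp hk]

theorem stmt5 {H : Type*} [NormedAddCommGroup H] [InnerProductSpace ℂ H] [CompleteSpace H]
    (R : DiskRKHS H) (f : H) (hf : R.ev f 0 ≠ 0) :
    (∀ j : ℕ, (inner ℂ ((R.shift ^ j) f) f : ℂ) = if j = 0 then 1 else 0) ↔
      (∀ n : ℕ, ∀ w : H, IsProjOn (R.fP f n) R.normK0 w →
        w = ((starRingEnd ℂ) (R.ev f 0) / (‖R.k0‖ : ℂ)) • f) := by
  set c : ℂ := (starRingEnd ℂ) (R.ev f 0) / (‖R.k0‖ : ℂ) with hc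
  have hk0 : (‖R.k0‖ : ℂ) ≠ 0 := by
    simpa using norm_ne_zero_iff.mpr R.k0_ne
  have hcne : c ≠ 0 := by
    apply div_ne_zero _ hk0
    simpa using hf
  have hnormK0 : R.normK0 = ((‖R.k0‖ : ℂ))⁻¹ • R.k0 := by
    rw [DiskRKHS.normK0, RCLike.real_smul_eq_coe_smul (K := ℂ)]
    norm_cast
  -- key computation: ⟨S^k f, k̂₀ - c f⟩ in terms of ⟨S^k f, f⟩
  have key : ∀ k : ℕ, (inner ℂ ((R.shift ^ k) f) (R.normK0 - c • f) : ℂ)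
      = (if k = 0 then (starRingEnd ℂ) (R.ev f 0) else 0) * (‖R.k0‖ : ℂ)⁻¹
        - c * inner ℂ ((R.shift ^ k) f) f := by
    intro k
    rw [inner_sub_right, hnormK0, inner_smul_right, inner_smul_right,
      R.inner_pow_k0 f k]
    ring
  constructor
  · -- forward direction
    intro hinner n w hw
    have hcf : IsProjOn (R.fP f n) R.normK0 (c • f) := by
      constructor
      · apply Submodule.smul_mem
        apply Submodule.subset_span
        exact ⟨(0 : Fin (n+1)), by simp⟩
      · intro u hu
        induction hu using Submodule.span_induction with
        | mem x h =>
          obtain ⟨k, rfl⟩ := h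
          rw [key (k : ℕ), hinner (k : ℕ)]
          rcases Nat.eq_zero_or_pos (k : ℕ) with h | h
          · rw [h, if_pos rfl, if_pos rfl, hc, div_eq_mul_inv]; ring
          · have : (k : ℕ) ≠ 0 := h.ne'
            simp [this]
        | zero => simp
        | add x y _ _ hx hy => rw [inner_add_left, hx, hy, add_zero]
        | smul a x _ hx => rw [inner_smul_left, hx, mul_zero]
    exact hw.unique hcf
  · -- converse direction
    intro hproj j
    haveI : FiniteDimensional ℂ (R.fP f j) :=
      FiniteDimensional.span_of_finite ℂ (Set.finite_range _)
    set w : H := ((R.fP f j).orthogonalProjectionOnto R.normK0 : H) with hwdef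
    have hw : IsProjOn (R.fP f j) R.normK0 w := by
      constructor
      · exact SetLike.coe_mem _
      · intro u hu
        exact (Submodule.mem_orthogonal _ _).mp
          (Submodule.sub_starProjection_mem_orthogonal (K := R.fP f j) R.normK0) u hu
    have hwc : w = c • f := hproj j w hw
    have hj : (R.shift ^ j) f ∈ R.fP f j :=
      Submodule.subset_span ⟨(⟨j, Nat.lt_succ_self j⟩ : Fin (j+1)), rfl⟩
    have h0 := hw.2 _ hj
    rw [hwc, key j] at h0
    have h0' : (if j = 0 then (starRingEnd ℂ) (R.ev f 0) else 0) * (‖R.k0‖ : ℂ)⁻¹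
        = c * inner ℂ ((R.shift ^ j) f) f := by linear_combination h0
    rcases Nat.eq_zero_or_pos j with rfl | hjpos
    · rw [if_pos rfl]
      rw [if_pos rfl] at h0'
      have hceq : c * inner ℂ ((R.shift ^ 0) f) f = c * 1 := by
        rw [← h0', mul_one, hc, div_eq_mul_inv]
      exact mul_left_cancel₀ hcne hceq
    · have hne : j ≠ 0 := hjpos.ne'
      rw [if_neg hne]
      rw [if_neg hne, zero_mul] at h0'
      exact (mul_eq_zero.mp h0'.symm).resolve_left hcne
end
end

section
/- Let f ∈ H with f(0) ≠ 0, let p_M*(z) = Σ_{k=0}^M a_k z^k with a_M ≠ 0, and suppose u := p_M* f / √((p_M* f)(0)) is H-inner and p_M* f is the orthogonal projection of k̂_0 onto f·P_M. Then ⟨z^{M+k} f, p_M* f⟩ = 0 for all k ≥ 1, and consequently p_M* f is the orthogonal projection of k̂_0 onto [f]. -/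
open Metric Filter
open scoped ComplexConjugate

noncomputable section

theorem stmt7 {H : Type*} [NormedAddCommGroup H] [InnerProductSpace ℂ H] [CompleteSpace H]
    (R : DiskRKHS H) (f : H) (hf : R.ev f 0 ≠ 0) (M : ℕ) (a : Fin (M+1) → ℂ)
    (haM : a (Fin.last M) ≠ 0)
    (w : H) (hw : w = ∑ k : Fin (M+1), a k • ((R.shift ^ (k : ℕ)) f))
    (hinner : ∀ j : ℕ, (inner ℂ ((R.shift ^ j) w) w : ℂ) = if j = 0 then R.ev w 0 else 0)
    (hproj : IsProjOn (R.fP f M) R.normK0 w) :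
    (∀ k : ℕ, 1 ≤ k → (inner ℂ ((R.shift ^ (M + k)) f) w : ℂ) = 0) ∧
      IsProjOn (R.cyc f) R.normK0 w := by
    -- evaluation of shifted elements at 0 vanishes
  have h0mem : (0:ℂ) ∈ ball (0:ℂ) 1 := by simp
  have hev0 : ∀ i : ℕ, 1 ≤ i → R.ev ((R.shift ^ i) f) 0 = 0 := by
    intro i hi
    obtain ⟨i', rfl⟩ := Nat.exists_eq_add_of_le hi
    rw [add_comm, pow_succ']
    have := R.ev_shift ((R.shift ^ i') f) 0 h0mem
    simpa using this
  have hK0 : ∀ i : ℕ, 1 ≤ i → (inner ℂ ((R.shift ^ i) f) R.normK0 : ℂ) = 0 := by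
    intro i hi
    have h2 : (inner ℂ R.k0 ((R.shift ^ i) f) : ℂ) = 0 := by rw [R.repro, hev0 i hi]
    have h3 : (inner ℂ ((R.shift ^ i) f) R.k0 : ℂ) = 0 := inner_eq_zero_symm.mpr h2
    rw [DiskRKHS.normK0, RCLike.real_smul_eq_coe_smul (K := ℂ), inner_smul_right, h3, mul_zero]
  have hmemfP : ∀ i : ℕ, i ≤ M → (R.shift ^ i) f ∈ R.fP f M := by
    intro i hi
    exact Submodule.subset_span ⟨⟨i, Nat.lt_succ_of_le hi⟩, rfl⟩
  -- from the projection hypothesis: inner (S^i f) w = inner (S^i f) normK0 for i ≤ M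
  have hlow : ∀ i : ℕ, 1 ≤ i → i ≤ M → (inner ℂ ((R.shift ^ i) f) w : ℂ) = 0 := by
    intro i h1 h2
    have := hproj.2 _ (hmemfP i h2)
    rw [inner_sub_right, sub_eq_zero] at this
    rw [← this, hK0 i h1]
  -- the key claim by strong induction
  have key : ∀ i : ℕ, 1 ≤ i → (inner ℂ ((R.shift ^ i) f) w : ℂ) = 0 := by
    intro i
    induction i using Nat.strong_induction_on with
    | _ i ih =>
      intro hi
      rcases le_or_gt i M with h | h
      · exact hlow i hi h
      · -- i = M + k with k ≥ 1
        obtain ⟨k, rfl⟩ := Nat.exists_eq_add_of_lt h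
        have hk : 1 ≤ k + 1 := Nat.succ_le_succ (Nat.zero_le _)
        have h1 := hinner (k + 1)
        rw [if_neg (Nat.succ_ne_zero k)] at h1
        have hsum : (R.shift ^ (k+1)) w
            = ∑ j : Fin (M+1), a j • ((R.shift ^ (k + 1 + (j:ℕ))) f) := by
          rw [hw, map_sum]
          refine Finset.sum_congr rfl fun j _ => ?_
          rw [map_smul, ← ContinuousLinearMap.mul_apply, ← pow_add]
        rw [hsum, sum_inner] at h1
        rw [Fin.sum_univ_castSucc] at h1
        have hzero : ∀ j : Fin M,
            (inner ℂ ((a j.castSucc) • (R.shift ^ (k + 1 + ((j.castSucc):ℕ))) f) w : ℂ) = 0 := by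
          intro j
          rw [inner_smul_left]
          have hj1 : 1 ≤ k + 1 + ((j.castSucc):ℕ) := le_trans hk (Nat.le_add_right _ _)
          have hj2 : k + 1 + ((j.castSucc):ℕ) < M + (k+1) := by
            have : ((j.castSucc):ℕ) < M := j.isLt
            omega
          rw [ih _ hj2 hj1, mul_zero]
        rw [Finset.sum_eq_zero (fun j _ => hzero j), zero_add] at h1
        rw [inner_smul_left] at h1
        have hlast : ((Fin.last M : Fin (M+1)) : ℕ) = M := rfl
        rw [hlast] at h1
        have haM' : (starRingEnd ℂ) (a (Fin.last M)) ≠ 0 := by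
          simpa using haM
        have := mul_eq_zero.mp h1
        rcases this with h' | h'
        · exact absurd h' haM'
        · rw [show M + k + 1 = k + 1 + M by ring]
          exact h'
  refine ⟨fun k hk => ?_, ?_, ?_⟩
  · rw [show M + k = k + M from add_comm M k] at *
    exact key (k + M) (le_trans hk (Nat.le_add_right _ _))
  · -- w ∈ cyc f
    apply Submodule.le_topologicalClosure
    rw [hw]
    exact Submodule.sum_mem _ fun k _ =>
      Submodule.smul_mem _ _ (Submodule.subset_span ⟨(k:ℕ), rfl⟩)
  · -- orthogonality on the whole cyclic subspace
    intro v hv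
    set x := R.normK0 - w with hx
    have hspan : Submodule.span ℂ (Set.range fun n : ℕ => (R.shift ^ n) f) ≤ (ℂ ∙ x)ᗮ := by
      rw [Submodule.span_le]
      rintro _ ⟨n, rfl⟩
      rw [SetLike.mem_coe, Submodule.mem_orthogonal_singleton_iff_inner_left]
      rcases le_or_gt n M with h | h
      · exact hproj.2 _ (hmemfP n h)
      · have hn1 : 1 ≤ n := le_trans (Nat.succ_le_succ (Nat.zero_le _)) h
        rw [hx, inner_sub_right, hK0 n hn1, key n hn1, sub_zero]
    have hclosed : (Submodule.span ℂ (Set.range fun n : ℕ => (R.shift ^ n) f)).topologicalClosure ≤ (ℂ ∙ x)ᗮ :=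
      Submodule.topologicalClosure_minimal _ hspan (Submodule.isClosed_orthogonal _)
    exact Submodule.mem_orthogonal_singleton_iff_inner_left.mp (hclosed hv)
end
end

section
/- Let f, g ∈ H with ⟨f, g⟩ ≠ 0 and let q_M* be the M-th optimal polynomial approximant to g/f. If q_M* f ∈ K_{Sf} (i.e., ⟨q_M* f, z^k f⟩ = 0 for all k ≥ 1), then q_M* f/‖q_M* f‖ is H-inner. -/
open Metric Filter
open scoped ComplexConjugate

noncomputable section

theorem stmt12 {H : Type*} [NormedAddCommGroup H] [InnerProductSpace ℂ H] [CompleteSpace H]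
    (R : DiskRKHS H) (f g : H) (hfg : (inner ℂ g f : ℂ) ≠ 0) (M : ℕ) (w : H)
    (hw : IsProjOn (R.fP f M) g w) (hK : R.InKSf f w) :
    ∀ j : ℕ, (inner ℂ ((R.shift ^ j) (‖w‖⁻¹ • w)) (‖w‖⁻¹ • w) : ℂ) =
      if j = 0 then 1 else 0 := by
  intro j
  have hf : f ∈ R.fP f M := by
    apply Submodule.subset_span
    exact ⟨⟨0, Nat.succ_pos M⟩, by simp⟩
  have hwne : w ≠ 0 := by
    intro h0
    have h1 := hw.2 f hf
    rw [h0, sub_zero] at h1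
    apply hfg
    exact inner_eq_zero_symm.mp h1
  have hnorm : (‖w‖ : ℝ) ≠ 0 := norm_ne_zero_iff.mpr hwne
  by_cases hj : j = 0
  · subst hj
    simp only [pow_zero, ContinuousLinearMap.one_apply, if_pos,
      inner_self_eq_norm_sq_to_K, norm_smul, norm_inv, norm_norm,
      inv_mul_cancel₀ hnorm]
    norm_num
  · rw [if_neg hj]
    have hj1 : 1 ≤ j := Nat.one_le_iff_ne_zero.mpr hj
    have key : ∀ v ∈ R.fP f M, (inner ℂ ((R.shift ^ j) v) w : ℂ) = 0 := by
      intro v hv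
      induction hv using Submodule.span_induction with
      | mem x hx =>
        obtain ⟨k, rfl⟩ := hx
        have : (R.shift ^ j) ((R.shift ^ (k : ℕ)) f) = (R.shift ^ (j + (k : ℕ))) f := by
          rw [pow_add, ContinuousLinearMap.mul_apply]
        rw [this]
        exact hK _ (le_trans hj1 (Nat.le_add_right j k))
      | zero => simp
      | add x y _ _ hx hy => rw [map_add, inner_add_left, hx, hy, add_zero]
      | smul c x _ hx => rw [map_smul, inner_smul_left, hx, mul_zero]
    have h0 : (inner ℂ ((R.shift ^ j) w) w : ℂ) = 0 := key w hw.1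
    rw [RCLike.real_smul_eq_coe_smul (K := ℂ), map_smul, inner_smul_left,
      inner_smul_right, h0, mul_zero, mul_zero]
end
end
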